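/- Let X be a finite set with |X| = 3q and C = {c_1, ..., c_m} a family of three-element subsets of X. If the graph G(C,X) has a matching M with at least m + 3q edges such that the subgraph G(C,X)[M] induced by the M-saturated vertices has at least m - q + 1 connected components, then there exists an exact cover of X by sets of C. -/

import Mathlib

open SimpleGraph

/-- `M` is a matching of `G`, viewed as a set of edges. -/
def MatchingEdges {V : Type*} (G : SimpleGraph V) (M : Set (Sym2 V)) : Prop :=
  M ⊆ G.edgeSet ∧ ∀ e ∈ M, ∀ f ∈ M, e ≠ f → ∀ v : V, v ∈ e → v ∉ f

/-- The set of `M`-saturated vertices. -/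
def msat {V : Type*} (M : Set (Sym2 V)) : Set V := {v | ∃ e ∈ M, v ∈ e}

/-- Vertex type of the exact-cover construction: `Sum.inl ⟨i, x⟩` is `w_{i,x}` (for
`x ∈ c_i`), `Sum.inr (Sum.inl (i, 0))` is `w_i^+`, `Sum.inr (Sum.inl (i, 1))` is
`w_i^-`, and `Sum.inr (Sum.inr x)` is `v_x`. -/
abbrev XCVert (α : Type*) (m : ℕ) (C : Fin m → Finset α) : Type _ :=
  (Σ i : Fin m, {x : α // x ∈ C i}) ⊕ ((Fin m × Fin 2) ⊕ α)

/-- The graph `G(C,X)` of the exact-cover construction. -/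
def XCGraph {α : Type*} (m : ℕ) (C : Fin m → Finset α) :
    SimpleGraph (XCVert α m C) :=
  SimpleGraph.fromRel (fun a b =>
    match a, b with
    | Sum.inl _, Sum.inl _ => True
    | Sum.inl ⟨i, _⟩, Sum.inr (Sum.inl (j, _)) => i = j
    | Sum.inr (Sum.inl (i, _)), Sum.inr (Sum.inl (j, _)) => i = j
    | Sum.inl ⟨_, x⟩, Sum.inr (Sum.inr y) => (x : α) = y
    | _, _ => False)

/-- There is an exact cover of `X = α` by sets of the family `C`: a subfamily of
pairwise disjoint sets whose union is all of `X`. -/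
def ExactCoverFam {α : Type*} [Fintype α] [DecidableEq α] {m : ℕ}
    (C : Fin m → Finset α) : Prop :=
  ∃ T : Finset (Fin m), (∀ i ∈ T, ∀ j ∈ T, i ≠ j → Disjoint (C i) (C j)) ∧
    T.biUnion C = Finset.univ

namespace XCAux

open scoped Classical

/-! ### Partner machinery for matchings given as edge sets -/

noncomputable def partner {V : Type*} (M : Set (Sym2 V)) (v : V) : V :=
  if h : ∃ u, s(v, u) ∈ M then h.choose else v

theorem partner_spec {V : Type*} {M : Set (Sym2 V)} {v : V} (h : v ∈ msat M) :
    s(v, partner M v) ∈ M := by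
  have hex : ∃ u, s(v, u) ∈ M := by
    obtain ⟨e, heM, hve⟩ := h
    induction e using Sym2.ind with
    | _ a b =>
      rcases Sym2.mem_iff.mp hve with rfl | rfl
      · exact ⟨b, heM⟩
      · exact ⟨a, by rwa [Sym2.eq_swap]⟩
  rw [partner, dif_pos hex]
  exact hex.choose_spec

theorem partner_mem {V : Type*} {M : Set (Sym2 V)} {v : V} (h : v ∈ msat M) :
    partner M v ∈ msat M :=
  ⟨_, partner_spec h, Sym2.mem_mk_right _ _⟩

theorem partner_uniq {V : Type*} {G : SimpleGraph V} {M : Set (Sym2 V)}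
    (hm : MatchingEdges G M) {v u : V} (h : s(v, u) ∈ M) : u = partner M v := by
  have hv : v ∈ msat M := ⟨_, h, Sym2.mem_mk_left _ _⟩
  have h2 := partner_spec hv
  by_cases he : s(v, u) = s(v, partner M v)
  · exact Sym2.congr_right.mp he
  · exact absurd (Sym2.mem_mk_left _ _) (hm.2 _ h _ h2 he v (Sym2.mem_mk_left _ _))

theorem edge_eq {V : Type*} {G : SimpleGraph V} {M : Set (Sym2 V)}
    (hm : MatchingEdges G M) {v : V} {e : Sym2 V} (he : e ∈ M) (hv : v ∈ e) :
    e = s(v, partner M v) := by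
  induction e using Sym2.ind with
  | _ a b =>
    rcases Sym2.mem_iff.mp hv with rfl | rfl
    · rw [← partner_uniq hm he]
    · rw [Sym2.eq_swap] at he ⊢
      rw [← partner_uniq hm he]

/-! ### Adjacency lemmas for `XCGraph` -/

variable {α : Type*} {m : ℕ} {C : Fin m → Finset α}

theorem adj_inl_inl {p p' : Σ i : Fin m, {x : α // x ∈ C i}} (h : p ≠ p') :
    (XCGraph m C).Adj (Sum.inl p) (Sum.inl p') := by
  simp [XCGraph, fromRel_adj, h]

theorem adj_inl_pm (i : Fin m) (p : {x : α // x ∈ C i}) (s : Fin 2) :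
    (XCGraph m C).Adj (Sum.inl ⟨i, p⟩) (Sum.inr (Sum.inl (i, s))) := by
  simp [XCGraph, fromRel_adj]

theorem adj_pm_pm (i : Fin m) {s t : Fin 2} (h : s ≠ t) :
    (XCGraph m C).Adj (Sum.inr (Sum.inl (i, s)) : XCVert α m C)
      (Sum.inr (Sum.inl (i, t))) := by
  simp [XCGraph, fromRel_adj, h]

theorem adj_vx {u : XCVert α m C} {x : α}
    (h : (XCGraph m C).Adj u (Sum.inr (Sum.inr x))) :
    ∃ (i : Fin m) (hx : x ∈ C i), u = Sum.inl ⟨i, ⟨x, hx⟩⟩ := by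
  rcases u with ⟨i, y, hy⟩ | (⟨i, s⟩ | y)
  · have : y = x := by simpa [XCGraph, fromRel_adj] using h
    subst this
    exact ⟨i, hy, rfl⟩
  · simp [XCGraph, fromRel_adj] at h
  · simp [XCGraph, fromRel_adj] at h

theorem adj_inl_vx_val {i : Fin m} {p : {x : α // x ∈ C i}} {x : α}
    (h : (XCGraph m C).Adj (Sum.inl ⟨i, p⟩) (Sum.inr (Sum.inr x))) :
    (p : α) = x := by
  obtain ⟨j, hx, hu⟩ := adj_vx h
  cases hu
  rfl

/-! ### The bound on the number of saturated cliques from the component count -/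

theorem N_card_bound {α : Type*} [Fintype α] [DecidableEq α] {q m : ℕ}
    {C : Fin m → Finset α} {M : Set (Sym2 (XCVert α m C))}
    (hm : MatchingEdges (XCGraph m C) M)
    (hcomp : m - q + 1 ≤
      Nat.card ((XCGraph m C).induce (msat M)).ConnectedComponent) :
    (Finset.univ.filter (fun i : Fin m =>
      ∃ p : {x : α // x ∈ C i}, (Sum.inl ⟨i, p⟩ : XCVert α m C) ∈ msat M)).card ≤ q := by
  set N := Finset.univ.filter (fun i : Fin m =>
      ∃ p : {x : α // x ∈ C i}, (Sum.inl ⟨i, p⟩ : XCVert α m C) ∈ msat M) with hNdef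
  set H := (XCGraph m C).induce (msat M) with hHdef
  have hsame' : ∀ (a b : ↑(msat M)),
      ((a : XCVert α m C) = b ∨ (XCGraph m C).Adj a b) →
      H.connectedComponentMk a = H.connectedComponentMk b := by
    rintro a b (h | h)
    · congr 1
      exact Subtype.ext h
    · exact ConnectedComponent.sound (Adj.reachable (by simpa [hHdef, comap_adj] using h))
  have hsame : ∀ (v w : XCVert α m C) (hv : v ∈ msat M) (hw : w ∈ msat M),
      (XCGraph m C).Adj v w →
      H.connectedComponentMk ⟨v, hv⟩ = H.connectedComponentMk ⟨w, hw⟩ :=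
    fun v w hv hw hadj => hsame' ⟨v, hv⟩ ⟨w, hw⟩ (Or.inr hadj)
  set PK : H.ConnectedComponent → Prop := fun c =>
    ∃ (p : Σ i : Fin m, {x : α // x ∈ C i})
      (hp : (Sum.inl p : XCVert α m C) ∈ msat M),
      H.connectedComponentMk ⟨Sum.inl p, hp⟩ = c with hPKdef
  have hsameK : ∀ c1 c2, PK c1 → PK c2 → c1 = c2 := by
    rintro c1 c2 ⟨p1, hp1, rfl⟩ ⟨p2, hp2, rfl⟩
    by_cases h : p1 = p2
    · subst h; rfl
    · exact hsame _ _ _ _ (adj_inl_inl h)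
  have hrep : ∀ c : H.ConnectedComponent, ¬ PK c →
      ∃ i : Fin m, i ∉ N ∧ ∃ (s : Fin 2)
        (hmem : (Sum.inr (Sum.inl (i, s)) : XCVert α m C) ∈ msat M),
        H.connectedComponentMk ⟨Sum.inr (Sum.inl (i, s)), hmem⟩ = c := by
    intro c
    induction c using ConnectedComponent.ind with
    | _ a =>
      intro hc
      obtain ⟨v, hv⟩ := a
      rcases v with p | (⟨i, s⟩ | x)
      · exact absurd ⟨p, hv, rfl⟩ hc
      · refine ⟨i, ?_, s, hv, rfl⟩
        intro hiN
        obtain ⟨p, hp⟩ := (Finset.mem_filter.mp hiN).2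
        exact hc ⟨⟨i, p⟩, hp, hsame _ _ _ _ (adj_inl_pm i p s)⟩
      · exfalso
        have hsatx : (Sum.inr (Sum.inr x) : XCVert α m C) ∈ msat M := hv
        have he := partner_spec hsatx
        have hpm : partner M (Sum.inr (Sum.inr x) : XCVert α m C) ∈ msat M :=
          partner_mem hsatx
        have hadj : (XCGraph m C).Adj (Sum.inr (Sum.inr x))
            (partner M (Sum.inr (Sum.inr x))) := (XCGraph m C).mem_edgeSet.mp (hm.1 he)
        obtain ⟨i, hx, hu⟩ := adj_vx hadj.symm
        rw [hu] at hpm hadj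
        exact hc ⟨⟨i, ⟨x, hx⟩⟩, hpm, hsame _ _ _ _ hadj.symm⟩
  let g : H.ConnectedComponent → Option {i : Fin m // i ∉ N} := fun c =>
    if h : PK c then none else some ⟨(hrep c h).choose, (hrep c h).choose_spec.1⟩
  have hginj : Function.Injective g := by
    have hgnone : ∀ c (h : PK c), g c = none := fun c h => dif_pos h
    have hgsome : ∀ c (h : ¬ PK c),
        g c = some ⟨(hrep c h).choose, (hrep c h).choose_spec.1⟩ := fun c h => dif_neg h
    intro c1 c2 hg
    by_cases h1 : PK c1 <;> by_cases h2 : PK c2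
    · exact hsameK _ _ h1 h2
    · rw [hgnone _ h1, hgsome _ h2] at hg
      exact absurd hg.symm (Option.some_ne_none _)
    · rw [hgsome _ h1, hgnone _ h2] at hg
      exact absurd hg (Option.some_ne_none _)
    · rw [hgsome _ h1, hgsome _ h2] at hg
      have hii : (hrep c1 h1).choose = (hrep c2 h2).choose :=
        congrArg Subtype.val (Option.some.inj hg)
      obtain ⟨s1, hm1, hc1⟩ := (hrep c1 h1).choose_spec.2
      obtain ⟨s2, hm2, hc2⟩ := (hrep c2 h2).choose_spec.2
      rw [← hc1, ← hc2]
      apply hsame'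
      by_cases hs : s1 = s2
      · left
        exact congrArg (fun p : Fin m × Fin 2 => (Sum.inr (Sum.inl p) : XCVert α m C))
          (by rw [hii, hs])
      · right
        have hadj : (XCGraph m C).Adj
            (Sum.inr (Sum.inl ((hrep c1 h1).choose, s1)) : XCVert α m C)
            (Sum.inr (Sum.inl ((hrep c2 h2).choose, s2))) := by
          rw [hii]
          exact adj_pm_pm _ hs
        exact hadj
  have hle := Nat.card_le_card_of_injective g hginj
  have hcardo : Nat.card (Option {i : Fin m // i ∉ N}) = (m - N.card) + 1 := by
    rw [Nat.card_eq_fintype_card, Fintype.card_option, Fintype.card_subtype]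
    have : (Finset.univ.filter (fun i : Fin m => i ∉ N)) = Nᶜ := by
      ext i; simp
    rw [this, Finset.card_compl, Fintype.card_fin]
  have hNm : N.card ≤ m := by
    simpa using Finset.card_le_card (Finset.subset_univ N)
  rw [hcardo] at hle
  omega

end XCAux

open XCAux in
open scoped Classical in
/-- If `G(C,X)` has a matching `M` with at least `m + 3q` edges whose saturated vertices
induce a subgraph with at least `m - q + 1` connected components, then there is an exact
cover of `X` by sets of `C`. -/
theorem disconnected_matching_to_exactCover {α : Type*} [Fintype α] [DecidableEq α]
    (q m : ℕ) (hq : Fintype.card α = 3 * q) (C : Fin m → Finset α)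
    (hC : ∀ i, (C i).card = 3)
    (hM : ∃ M : Set (Sym2 (XCVert α m C)), MatchingEdges (XCGraph m C) M ∧
      m + 3 * q ≤ M.ncard ∧
      m - q + 1 ≤ Nat.card ((XCGraph m C).induce (msat M)).ConnectedComponent) :
    ExactCoverFam C := by
  obtain ⟨M, hm, hcard, hcomp⟩ := hM
  have hfin : M.Finite := Set.toFinite M
  set Mf : Finset (Sym2 (XCVert α m C)) := hfin.toFinset with hMfdef
  have hmemMf : ∀ e, e ∈ Mf ↔ e ∈ M := fun e => Set.Finite.mem_toFinset _
  rw [Set.ncard_eq_toFinset_card M hfin, ← hMfdef] at hcard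
  set N := Finset.univ.filter (fun i : Fin m =>
      ∃ p : {x : α // x ∈ C i}, (Sum.inl ⟨i, p⟩ : XCVert α m C) ∈ msat M) with hNdef
  have hNq : N.card ≤ q := N_card_bound hm hcomp
  clear hcomp
  -- saturated vertices as a finset, partitioned by type
  set msatF := Finset.univ.filter (fun v : XCVert α m C => v ∈ msat M) with hmsatFdef
  -- counting: 2 * |M| = |msatF|
  have hfib : msatF.card = 2 * Mf.card := by
    have h1 : msatF.card = ∑ e ∈ Mf,
        (msatF.filter (fun v => s(v, partner M v) = e)).card := by
      refine Finset.card_eq_sum_card_fiberwise ?_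
      intro v hv
      rw [Finset.mem_coe, hmemMf]
      exact partner_spec ((Finset.mem_filter.mp hv).2)
    have h2 : ∀ e ∈ Mf, (msatF.filter (fun v => s(v, partner M v) = e)).card = 2 := by
      intro e he
      rw [hmemMf] at he
      revert he
      induction e using Sym2.ind with
      | _ a b =>
        intro he
        have hadj : (XCGraph m C).Adj a b := (XCGraph m C).mem_edgeSet.mp (hm.1 he)
        have : msatF.filter (fun v => s(v, partner M v) = s(a, b)) = {a, b} := by
          ext v
          simp only [Finset.mem_filter, hmsatFdef, Finset.mem_univ, true_and,
            Finset.mem_insert, Finset.mem_singleton]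
          constructor
          · rintro ⟨hv, hev⟩
            have : v ∈ s(a, b) := by
              rw [← hev]; exact Sym2.mem_mk_left _ _
            exact Sym2.mem_iff.mp this
          · rintro (rfl | rfl)
            · exact ⟨⟨_, he, Sym2.mem_mk_left _ _⟩,
                (edge_eq hm he (Sym2.mem_mk_left _ _)).symm⟩
            · exact ⟨⟨_, he, Sym2.mem_mk_right _ _⟩,
                (edge_eq hm he (Sym2.mem_mk_right _ _)).symm⟩
        rw [this, Finset.card_insert_of_notMem (by simp [hadj.ne]),
          Finset.card_singleton]
    rw [h1, Finset.sum_congr rfl h2, Finset.sum_const, smul_eq_mul, mul_comm]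
  -- partition of msatF by vertex type
  set AF := msatF.filter (fun v : XCVert α m C => ∃ p, v = Sum.inl p) with hAFdef
  set RF := msatF.filter (fun v : XCVert α m C => ¬ ∃ p, v = Sum.inl p) with hRFdef
  set BF := RF.filter (fun v : XCVert α m C => ∃ i s, v = Sum.inr (Sum.inl (i, s)))
    with hBFdef
  set DF := RF.filter
    (fun v : XCVert α m C => ¬ ∃ i s, v = Sum.inr (Sum.inl (i, s))) with hDFdef
  have hsplit1 : AF.card + RF.card = msatF.card :=
    Finset.card_filter_add_card_filter_not _
  have hsplit2 : BF.card + DF.card = RF.card :=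
    Finset.card_filter_add_card_filter_not _
  -- bounds
  set Nbi := N.biUnion (fun i => (C i).attach.image
    (fun p => (Sum.inl ⟨i, p⟩ : XCVert α m C))) with hNbidef
  have hsubA : AF ⊆ Nbi := by
    intro v hv
    obtain ⟨hv1, ⟨i, px⟩, rfl⟩ := Finset.mem_filter.mp hv
    have hsat : (Sum.inl ⟨i, px⟩ : XCVert α m C) ∈ msat M :=
      (Finset.mem_filter.mp hv1).2
    refine Finset.mem_biUnion.mpr ⟨i, ?_, ?_⟩
    · exact Finset.mem_filter.mpr ⟨Finset.mem_univ _, ⟨px, hsat⟩⟩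
    · exact Finset.mem_image.mpr ⟨px, Finset.mem_attach _ _, rfl⟩
  have hNbicard : Nbi.card ≤ 3 * N.card := by
    calc Nbi.card ≤ ∑ i ∈ N, ((C i).attach.image
        (fun p => (Sum.inl ⟨i, p⟩ : XCVert α m C))).card := Finset.card_biUnion_le
      _ ≤ ∑ _i ∈ N, 3 := by
          refine Finset.sum_le_sum fun i _ => ?_
          calc ((C i).attach.image _).card ≤ (C i).attach.card :=
                Finset.card_image_le
            _ = 3 := by rw [Finset.card_attach, hC i]
      _ = 3 * N.card := by rw [Finset.sum_const, smul_eq_mul, mul_comm]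
  have hBle : BF.card ≤ 2 * m := by
    have hsub : BF ⊆ Finset.univ.image
        (fun p : Fin m × Fin 2 => (Sum.inr (Sum.inl p) : XCVert α m C)) := by
      intro v hv
      obtain ⟨_, i, s, rfl⟩ := Finset.mem_filter.mp hv
      exact Finset.mem_image.mpr ⟨(i, s), Finset.mem_univ _, rfl⟩
    calc BF.card ≤ _ := Finset.card_le_card hsub
      _ ≤ (Finset.univ : Finset (Fin m × Fin 2)).card := Finset.card_image_le
      _ = 2 * m := by simp [mul_comm]
  have hvximg : (Finset.univ.image
      (fun x : α => (Sum.inr (Sum.inr x) : XCVert α m C))).card ≤ 3 * q := by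
    calc _ ≤ (Finset.univ : Finset α).card := Finset.card_image_le
      _ = 3 * q := by rw [Finset.card_univ, hq]
  have hsubD : DF ⊆ Finset.univ.image
      (fun x : α => (Sum.inr (Sum.inr x) : XCVert α m C)) := by
    intro v hv
    obtain ⟨hv1, hv2⟩ := Finset.mem_filter.mp hv
    obtain ⟨_, hv3⟩ := Finset.mem_filter.mp hv1
    rcases v with p | (⟨i, s⟩ | x)
    · exact absurd ⟨p, rfl⟩ hv3
    · exact absurd ⟨i, s, rfl⟩ hv2
    · exact Finset.mem_image.mpr ⟨x, Finset.mem_univ _, rfl⟩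
  have hA1 : AF.card ≤ Nbi.card := Finset.card_le_card hsubA
  have hD1 : DF.card ≤ _ := Finset.card_le_card hsubD
  -- the equalities
  have hAcard : AF.card = 3 * q := by omega
  have hDcard : DF.card = 3 * q := by omega
  have hAeq : AF = Nbi := Finset.eq_of_subset_of_card_le hsubA (by omega)
  have hDeq : DF = Finset.univ.image
      (fun x : α => (Sum.inr (Sum.inr x) : XCVert α m C)) :=
    Finset.eq_of_subset_of_card_le hsubD (by omega)
  -- all cliques touched by the matching are fully saturated
  have hsatN : ∀ (i : Fin m), i ∈ N → ∀ p : {x : α // x ∈ C i},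
      (Sum.inl ⟨i, p⟩ : XCVert α m C) ∈ msat M := by
    intro i hi p
    have : (Sum.inl ⟨i, p⟩ : XCVert α m C) ∈ Nbi :=
      Finset.mem_biUnion.mpr ⟨i, hi, Finset.mem_image.mpr ⟨p, Finset.mem_attach _ _, rfl⟩⟩
    rw [← hAeq] at this
    exact (Finset.mem_filter.mp (Finset.mem_filter.mp this).1).2
  -- all element-vertices are saturated
  have hvsat : ∀ x : α, (Sum.inr (Sum.inr x) : XCVert α m C) ∈ msat M := by
    intro x
    have : (Sum.inr (Sum.inr x) : XCVert α m C) ∈ DF := by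
      rw [hDeq]
      exact Finset.mem_image.mpr ⟨x, Finset.mem_univ _, rfl⟩
    obtain ⟨hv1, _⟩ := Finset.mem_filter.mp this
    exact (Finset.mem_filter.mp (Finset.mem_filter.mp hv1).1).2
  -- the function matching each element to a clique vertex
  set φ : α → XCVert α m C := fun x => partner M (Sum.inr (Sum.inr x)) with hφdef
  have hφspec : ∀ x : α, s((Sum.inr (Sum.inr x) : XCVert α m C), φ x) ∈ M :=
    fun x => partner_spec (hvsat x)
  have hφadj : ∀ x : α, (XCGraph m C).Adj (Sum.inr (Sum.inr x)) (φ x) :=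
    fun x => (XCGraph m C).mem_edgeSet.mp (hm.1 (hφspec x))
  have hφA : ∀ x : α, φ x ∈ AF := by
    intro x
    obtain ⟨i, hx, hu⟩ := adj_vx (hφadj x).symm
    refine Finset.mem_filter.mpr ⟨Finset.mem_filter.mpr ⟨Finset.mem_univ _,
      partner_mem (hvsat x)⟩, ⟨⟨i, ⟨x, hx⟩⟩, hu⟩⟩
  have hφinj : Function.Injective φ := by
    intro x y hxy
    by_cases he : s((Sum.inr (Sum.inr x) : XCVert α m C), φ x)
        = s((Sum.inr (Sum.inr y) : XCVert α m C), φ y)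
    · rw [hxy] at he
      have := Sym2.congr_left.mp he
      simpa using this
    · exact absurd (by rw [hxy]; exact Sym2.mem_mk_right _ _)
        (hm.2 _ (hφspec x) _ (hφspec y) he (φ x) (Sym2.mem_mk_right _ _))
  have hφimg : Finset.univ.image φ = AF := by
    refine Finset.eq_of_subset_of_card_le ?_ ?_
    · intro v hv
      obtain ⟨x, _, rfl⟩ := Finset.mem_image.mp hv
      exact hφA x
    · rw [Finset.card_image_of_injective _ hφinj, Finset.card_univ, hq, hAcard]
  -- key : every saturated clique vertex is matched to its element vertex
  have hkey : ∀ (i : Fin m) (p : {x : α // x ∈ C i}),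
      (Sum.inl ⟨i, p⟩ : XCVert α m C) ∈ msat M →
      s((Sum.inr (Sum.inr (p : α)) : XCVert α m C), Sum.inl ⟨i, p⟩) ∈ M := by
    intro i p hsat
    have hmem : (Sum.inl ⟨i, p⟩ : XCVert α m C) ∈ AF :=
      Finset.mem_filter.mpr ⟨Finset.mem_filter.mpr ⟨Finset.mem_univ _, hsat⟩,
        ⟨⟨i, p⟩, rfl⟩⟩
    rw [← hφimg] at hmem
    obtain ⟨x, _, hx⟩ := Finset.mem_image.mp hmem
    have hadj := hφadj x
    rw [hx] at hadj
    have hval : (p : α) = x := adj_inl_vx_val hadj.symm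
    have := hφspec x
    rw [hx] at this
    rw [hval]
    exact this
  -- construct the exact cover
  refine ⟨N, ?_, ?_⟩
  · intro i hi j hj hij
    rw [Finset.disjoint_left]
    intro x hxi hxj
    have h1 := hkey i ⟨x, hxi⟩ (hsatN i hi ⟨x, hxi⟩)
    have h2 := hkey j ⟨x, hxj⟩ (hsatN j hj ⟨x, hxj⟩)
    have hne : s((Sum.inr (Sum.inr x) : XCVert α m C), Sum.inl ⟨i, ⟨x, hxi⟩⟩)
        ≠ s((Sum.inr (Sum.inr x) : XCVert α m C), Sum.inl ⟨j, ⟨x, hxj⟩⟩) := by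
      intro h
      have := Sym2.congr_right.mp h
      simp only [Sum.inl.injEq, Sigma.mk.inj_iff] at this
      exact hij this.1
    exact hm.2 _ h1 _ h2 hne _ (Sym2.mem_mk_left _ _) (Sym2.mem_mk_left _ _)
  · ext x
    simp only [Finset.mem_biUnion, Finset.mem_univ, iff_true]
    obtain ⟨i, hx, hu⟩ := adj_vx (hφadj x).symm
    refine ⟨i, ?_, hx⟩
    have hsat : (Sum.inl (⟨i, ⟨x, hx⟩⟩ : Σ i : Fin m, {x : α // x ∈ C i})
        : XCVert α m C) ∈ msat M := by
      rw [← hu]; exact partner_mem (hvsat x)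
    exact Finset.mem_filter.mpr ⟨Finset.mem_univ _, ⟨⟨x, hx⟩, hsat⟩⟩
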